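/- The 8×8 matrix S_8 whose (j,k) entry is e^{2πi·M_{jk}/4}, where M is the integer matrix with rows (0,0,0,0,0,0,0,0), (0,2,1,3,0,2,1,3), (0,2,3,1,0,2,3,1), (0,0,2,2,1,1,3,3), (0,1,0,1,2,3,2,3), (0,3,0,3,2,1,2,1), (0,2,2,0,2,0,0,2), (0,0,2,2,3,3,1,1), is a complex Hadamard matrix. -/

import Mathlib

open Matrix Complex Real

/-- A complex Hadamard matrix: all entries unimodular and rows pairwise orthogonal. -/
def IsCHadamard {ι : Type*} [Fintype ι] [DecidableEq ι] (H : Matrix ι ι ℂ) : Prop :=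
  (∀ i j, ‖H i j‖ = 1) ∧ H * Hᴴ = (Fintype.card ι : ℂ) • 1

/-- The log-matrix (times 4) of the matrix `S₈`. -/
def M8 : Matrix (Fin 8) (Fin 8) ℕ :=
  !![0,0,0,0,0,0,0,0;
     0,2,1,3,0,2,1,3;
     0,2,3,1,0,2,3,1;
     0,0,2,2,1,1,3,3;
     0,1,0,1,2,3,2,3;
     0,3,0,3,2,1,2,1;
     0,2,2,0,2,0,0,2;
     0,0,2,2,3,3,1,1]

/-- Real part (as an integer) of `I ^ n`. -/
def re4 (n : ℕ) : ℤ := if n % 4 = 0 then 1 else if n % 4 = 2 then -1 else 0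

/-- Imaginary part (as an integer) of `I ^ n`. -/
def im4 (n : ℕ) : ℤ := if n % 4 = 1 then 1 else if n % 4 = 3 then -1 else 0

lemma Ipow (n : ℕ) : Complex.I ^ n = (re4 n : ℂ) + (im4 n : ℂ) * Complex.I := by
  conv_lhs => rw [← Nat.div_add_mod n 4, pow_add, pow_mul]
  have h : n % 4 = 0 ∨ n % 4 = 1 ∨ n % 4 = 2 ∨ n % 4 = 3 := by omega
  have h4 : Complex.I ^ 4 = 1 := by
    simp [pow_succ, Complex.I_mul_I]
  rcases h with h | h | h | h <;>
    simp [h4, h, re4, im4, pow_succ, Complex.I_mul_I]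

lemma term (a b : ℕ) : Complex.I ^ a * (starRingEnd ℂ) (Complex.I ^ b) = Complex.I ^ (a + 3 * b) := by
  rw [map_pow, Complex.conj_I, show (-Complex.I) = Complex.I ^ 3 by
    simp [pow_succ, Complex.I_mul_I], ← pow_mul, ← pow_add, mul_comm 3 b]

lemma key (m : ℕ) : Complex.exp (2 * π * Complex.I * (m:ℂ) / 4) = Complex.I ^ m := by
  rw [show 2 * (π:ℂ) * Complex.I * (m:ℂ) / 4 = m * ((π:ℂ)/2 * Complex.I) by ring,
    Complex.exp_nat_mul,
    show Complex.exp ((π:ℂ)/2 * Complex.I) = Complex.I by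
      simp [Complex.exp_mul_I, Complex.cos_pi_div_two, Complex.sin_pi_div_two]]

lemma hre : ∀ i j : Fin 8, (∑ k, re4 (M8 i k + 3 * M8 j k)) = if i = j then 8 else 0 := by
  decide

lemma him : ∀ i j : Fin 8, (∑ k, im4 (M8 i k + 3 * M8 j k)) = 0 := by
  decide

/-- The matrix `S₈` with entries `e^{2πi·M_{jk}/4}` is a complex Hadamard matrix. -/
theorem S8_isHadamard :
    IsCHadamard (Matrix.of fun j k : Fin 8 =>
      Complex.exp (2 * π * Complex.I * (M8 j k : ℂ) / 4)) := by
  constructor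
  · intro i j
    simp [key]
  · ext i j
    rw [Matrix.mul_apply]
    simp only [conjTranspose_apply, Matrix.of_apply, key, Complex.star_def]
    simp only [term]
    simp only [Ipow]
    rw [Finset.sum_add_distrib, ← Finset.sum_mul, ← Int.cast_sum, ← Int.cast_sum,
      hre, him]
    simp only [Matrix.smul_apply, Matrix.one_apply, Fintype.card_fin]
    split <;> simp
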